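/- For all integers n ≥ 0 and all odd integers t ≥ 1, the number of t-colored overpartitions of 8n+6 is divisible by 8, i.e., p̄_{-t}(8n+6) ≡ 0 (mod 8). -/

import Mathlib

open scoped Classical

/-- The infinite product `∏_{k ≥ 0} f k` of formal power series, in the situation where,
for each fixed power of `q`, only finitely many factors contribute: the coefficient of
`q^n` is read off from the product of the factors `f 0, …, f n` (all later factors are
assumed to be `1 + O(q^{n+1})`). -/
noncomputable def seriesProd (f : ℕ → PowerSeries ℤ) : PowerSeries ℤ :=
  PowerSeries.mk fun n => PowerSeries.coeff n (∏ k ∈ Finset.range (n + 1), f k)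

/-- The generating function `∏_{k ≥ 1} (1 - q^{2k})^t / (1 - q^k)^{2t}`
for `t`-colored overpartitions. -/
noncomputable def overGF (t : ℕ) : PowerSeries ℤ :=
  seriesProd fun k =>
    (1 - (PowerSeries.X : PowerSeries ℤ) ^ (2 * (k + 1))) ^ t *
      (PowerSeries.invOfUnit (1 - (PowerSeries.X : PowerSeries ℤ) ^ (k + 1)) 1) ^ (2 * t)

/-- `p̄_{-t}(n)`, the number of `t`-colored overpartitions of `n`: the coefficient of `q^n`
in `∏_{k ≥ 1} (1 - q^{2k})^t / (1 - q^k)^{2t}`. -/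
noncomputable def pbar (t n : ℕ) : ℤ :=
  PowerSeries.coeff n (overGF t)

/-- Ramanujan's theta function `φ(q^m) = 1 + 2 ∑_{k ≥ 1} q^{m k²}`. -/
noncomputable def phi (m : ℕ) : PowerSeries ℤ :=
  PowerSeries.mk fun n =>
    if n = 0 then 1 else if ∃ k : ℕ, 0 < k ∧ n = m * k ^ 2 then 2 else 0

/-- `φ(-q) = 1 + 2 ∑_{k ≥ 1} (-1)^{k²} q^{k²}` (note `(-1)^{k²} = (-1)^n` at `n = k²`). -/
noncomputable def phiNeg : PowerSeries ℤ :=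
  PowerSeries.mk fun n =>
    if n = 0 then 1 else if ∃ k : ℕ, 0 < k ∧ n = k ^ 2 then 2 * (-1) ^ n else 0

/-- Ramanujan's theta function `ψ(q^m) = ∑_{k ≥ 0} q^{m·k(k+1)/2}`. -/
noncomputable def psi (m : ℕ) : PowerSeries ℤ :=
  PowerSeries.mk fun n => if ∃ k : ℕ, 2 * n = m * (k * (k + 1)) then 1 else 0

/-- `f_r = ∏_{j ≥ 1} (1 - q^{r j})`. -/
noncomputable def fr (r : ℕ) : PowerSeries ℤ :=
  seriesProd fun j => 1 - (PowerSeries.X : PowerSeries ℤ) ^ (r * (j + 1))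

namespace Pbar8
open PowerSeries Finset

/-- truncated equality mod X^(n+1) -/
def TE (n : ℕ) (A B : PowerSeries ℤ) : Prop := ∀ j ≤ n, coeff j A = coeff j B

protected lemma TE.refl {n : ℕ} {A : PowerSeries ℤ} : TE n A A := fun _ _ => _root_.rfl

lemma TE.mul {n : ℕ} {A B C D : PowerSeries ℤ} (h1 : TE n A B) (h2 : TE n C D) :
    TE n (A * C) (B * D) := by
  intro j hj
  rw [coeff_mul, coeff_mul]
  refine Finset.sum_congr rfl fun x hx => ?_
  rw [Finset.HasAntidiagonal.mem_antidiagonal] at hx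
  rw [h1 x.1 (by omega), h2 x.2 (by omega)]

lemma TE.sum {n : ℕ} {ι : Type*} {s : Finset ι} {f g : ι → PowerSeries ℤ}
    (h : ∀ i ∈ s, TE n (f i) (g i)) : TE n (∑ i ∈ s, f i) (∑ i ∈ s, g i) := by
  intro j hj
  rw [map_sum, map_sum]
  exact Finset.sum_congr rfl fun i hi => h i hi j hj

lemma TE_zero_of_lt {n e : ℕ} (g : PowerSeries ℤ) (h : n < e) : TE n (X ^ e * g) 0 := by
  intro j hj
  rw [map_zero]
  exact (X_pow_dvd_iff.mp ⟨g, _root_.rfl⟩) j (lt_of_le_of_lt hj h)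

lemma TE_one_factor {n e : ℕ} (g : PowerSeries ℤ) (h : n < e) : TE n (1 + X ^ e * g) 1 := by
  intro j hj
  rw [map_add, TE_zero_of_lt g h j hj, map_zero, add_zero]

lemma TE.prod {n : ℕ} {ι : Type*} {s : Finset ι} {f : ι → PowerSeries ℤ}
    (h : ∀ i ∈ s, TE n (f i) 1) : TE n (∏ i ∈ s, f i) 1 := by
  classical
  induction s using Finset.cons_induction with
  | empty => simp only [Finset.prod_empty]; exact TE.refl
  | cons a s ha ih =>
    rw [Finset.prod_cons]
    have := TE.mul (h a (Finset.mem_cons_self a s)) (ih fun i hi => h i (Finset.mem_cons_of_mem hi))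
    simpa using this

lemma TE_Xpow_mul {n e : ℕ} {A B : PowerSeries ℤ} (h : TE n A B) :
    TE n (X ^ e * A) (X ^ e * B) := TE.mul TE.refl h

lemma TE_Xpow_high {n e : ℕ} (hne : n < e) (A B : PowerSeries ℤ) :
    TE n (X ^ e * A) (X ^ e * B) := by
  intro j hj
  rw [TE_zero_of_lt A hne j hj, TE_zero_of_lt B hne j hj]

/-- tameness: `f k = 1 + O(X^(k+1))` -/
def Tame (f : ℕ → PowerSeries ℤ) : Prop := ∀ k, ∃ g, f k = 1 + X ^ (k + 1) * g

lemma Tame.mul {f g : ℕ → PowerSeries ℤ} (hf : Tame f) (hg : Tame g) :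
    Tame fun k => f k * g k := by
  intro k
  obtain ⟨a, ha⟩ := hf k
  obtain ⟨b, hb⟩ := hg k
  refine ⟨a + b + X ^ (k + 1) * (a * b), ?_⟩
  show f k * g k = _
  rw [ha, hb]; ring

lemma tame_one : Tame fun _ => (1 : PowerSeries ℤ) := fun k => ⟨0, by ring⟩

lemma Tame.pow {f : ℕ → PowerSeries ℤ} (hf : Tame f) (t : ℕ) :
    Tame fun k => f k ^ t := by
  induction t with
  | zero => simpa using tame_one
  | succ t ih =>
    have := ih.mul hf
    simpa [pow_succ] using this

lemma coeff_prod_stable {f : ℕ → PowerSeries ℤ} (hf : Tame f) (n : ℕ) :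
    ∀ m, n + 1 ≤ m →
      coeff n (∏ k ∈ range m, f k) = coeff n (∏ k ∈ range (n + 1), f k) := by
  intro m
  induction m with
  | zero => omega
  | succ m ih =>
    intro h
    by_cases hm : n + 1 = m + 1
    · rw [hm]
    · have hm' : n + 1 ≤ m := by omega
      obtain ⟨g, hg⟩ := hf m
      have e1 : (∏ k ∈ range m, f k) * (X ^ (m + 1) * g) =
          X ^ (m + 1) * ((∏ k ∈ range m, f k) * g) := by ring
      have hz := TE_zero_of_lt ((∏ k ∈ range m, f k) * g) (show n < m + 1 by omega) n le_rfl
      rw [map_zero] at hz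
      rw [Finset.prod_range_succ, hg, mul_add, mul_one, map_add, e1, hz, add_zero]
      exact ih hm'

lemma coeff_seriesProd {f : ℕ → PowerSeries ℤ} (hf : Tame f) {n m : ℕ} (h : n + 1 ≤ m) :
    coeff n (seriesProd f) = coeff n (∏ k ∈ range m, f k) := by
  rw [seriesProd, coeff_mk, coeff_prod_stable hf n m h]

lemma seriesProd_mul {f g : ℕ → PowerSeries ℤ} (hf : Tame f) (hg : Tame g) :
    seriesProd (fun k => f k * g k) = seriesProd f * seriesProd g := by
  ext n
  rw [coeff_seriesProd (hf.mul hg) (le_refl (n + 1)), Finset.prod_mul_distrib,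
    coeff_mul, coeff_mul]
  refine Finset.sum_congr rfl fun x hx => ?_
  rw [Finset.HasAntidiagonal.mem_antidiagonal] at hx
  rw [coeff_seriesProd hf (by omega : x.1 + 1 ≤ n + 1),
    coeff_seriesProd hg (by omega : x.2 + 1 ≤ n + 1)]

lemma seriesProd_one : seriesProd (fun _ => (1 : PowerSeries ℤ)) = 1 := by
  ext n
  rw [coeff_seriesProd tame_one (le_refl (n + 1)), Finset.prod_const_one]

lemma seriesProd_pow {f : ℕ → PowerSeries ℤ} (hf : Tame f) (t : ℕ) :
    seriesProd (fun k => f k ^ t) = (seriesProd f) ^ t := by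
  induction t with
  | zero => simpa using seriesProd_one
  | succ t ih =>
    have h1 : seriesProd (fun k => f k ^ t * f k) = seriesProd (fun k => f k ^ t) * seriesProd f :=
      seriesProd_mul (hf.pow t) hf
    calc seriesProd (fun k => f k ^ (t + 1)) = seriesProd (fun k => f k ^ t * f k) := by
          simp [pow_succ]
      _ = (seriesProd f) ^ t * seriesProd f := by rw [h1, ih]
      _ = (seriesProd f) ^ (t + 1) := by rw [pow_succ]

lemma seriesProd_mul_inv {f g : ℕ → PowerSeries ℤ} (hf : Tame f) (hg : Tame g)
    (h : ∀ k, f k * g k = 1) : seriesProd f * seriesProd g = 1 := by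
  rw [← seriesProd_mul hf hg]
  have : (fun k => f k * g k) = fun _ => (1 : PowerSeries ℤ) := funext h
  rw [this, seriesProd_one]

end Pbar8

namespace Pbar8
open PowerSeries Finset

lemma constCoeff_one_sub_X_pow (e : ℕ) (he : 1 ≤ e) :
    constantCoeff (R := ℤ) (1 - X ^ e) = 1 := by
  rw [map_sub, map_one, map_pow, constantCoeff_X]
  rw [zero_pow (by omega : e ≠ 0), sub_zero]

lemma one_sub_X_pow_mul_inv (e : ℕ) (he : 1 ≤ e) :
    (1 - X ^ e) * invOfUnit (1 - (X : PowerSeries ℤ) ^ e) 1 = 1 :=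
  PowerSeries.mul_invOfUnit _ 1 (by rw [constCoeff_one_sub_X_pow e he]; rfl)

/-- cancellation by a series with constant coefficient 1 -/
lemma cancel_const_one {u a b : PowerSeries ℤ} (hu : constantCoeff u = 1)
    (h : a * u = b * u) : a = b := by
  have hinv : u * invOfUnit u 1 = 1 := PowerSeries.mul_invOfUnit _ 1 (by rw [hu]; rfl)
  calc a = a * (u * invOfUnit u 1) := by rw [hinv, mul_one]
    _ = (a * u) * invOfUnit u 1 := by ring
    _ = (b * u) * invOfUnit u 1 := by rw [h]
    _ = b * (u * invOfUnit u 1) := by ring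
    _ = b := by rw [hinv, mul_one]

lemma tame_sub_pow2 : Tame fun k => 1 - (X : PowerSeries ℤ) ^ (2 * (k + 1)) := by
  intro k
  refine ⟨-X ^ (k + 1), ?_⟩
  show 1 - X ^ (2 * (k + 1)) = _
  have h2 : 2 * (k + 1) = (k + 1) + (k + 1) := by omega
  rw [h2, pow_add]; ring

lemma tame_sub_pow1 : Tame fun k => 1 - (X : PowerSeries ℤ) ^ (1 * (k + 1)) := by
  intro k
  refine ⟨-1, ?_⟩
  show 1 - X ^ (1 * (k + 1)) = _
  rw [one_mul]; ring

lemma tame_inv : Tame fun k => invOfUnit (1 - (X : PowerSeries ℤ) ^ (k + 1)) 1 := by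
  intro k
  refine ⟨invOfUnit (1 - (X : PowerSeries ℤ) ^ (k + 1)) 1, ?_⟩
  have h := one_sub_X_pow_mul_inv (k + 1) (by omega)
  show invOfUnit (1 - (X : PowerSeries ℤ) ^ (k + 1)) 1 = _
  linear_combination h

/-- the series `∏ 1/(1-q^k)` -/
noncomputable def V : PowerSeries ℤ :=
  seriesProd fun k => invOfUnit (1 - (X : PowerSeries ℤ) ^ (k + 1)) 1

lemma V_mul_fr1 : V * fr 1 = 1 := by
  rw [V, fr]
  exact seriesProd_mul_inv tame_inv tame_sub_pow1
    (fun k => by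
      have h := one_sub_X_pow_mul_inv (k + 1) (by omega)
      rw [one_mul]; linear_combination h)

lemma overGF_eq (t : ℕ) : overGF t = (fr 2) ^ t * V ^ (2 * t) := by
  rw [overGF, fr, V]
  rw [show (fun k => (1 - (X : PowerSeries ℤ) ^ (2 * (k + 1))) ^ t *
      (invOfUnit (1 - (X : PowerSeries ℤ) ^ (k + 1)) 1) ^ (2 * t)) =
    (fun k => ((fun k => 1 - (X : PowerSeries ℤ) ^ (2 * (k + 1))) k) ^ t *
      ((fun k => invOfUnit (1 - (X : PowerSeries ℤ) ^ (k + 1)) 1) k) ^ (2 * t)) from rfl]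
  rw [seriesProd_mul (tame_sub_pow2.pow t) (tame_inv.pow (2 * t)),
    seriesProd_pow tame_sub_pow2 t, seriesProd_pow tame_inv (2 * t)]

end Pbar8

namespace Pbar8
open PowerSeries Finset

/-- `∏_{i=1}^m (1 - X^{2i})` -/
noncomputable def D2 (m : ℕ) : PowerSeries ℤ := ∏ i ∈ range m, (1 - X ^ (2 * (i + 1)))

lemma constD2 (m : ℕ) : constantCoeff (D2 m) = 1 := by
  rw [D2, map_prod]
  rw [Finset.prod_congr rfl fun i _ => constCoeff_one_sub_X_pow (2 * (i + 1)) (by omega)]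
  exact Finset.prod_const_one

noncomputable def I2 (m : ℕ) : PowerSeries ℤ := invOfUnit (D2 m) 1

lemma D2_mul_I2 (m : ℕ) : D2 m * I2 m = 1 :=
  PowerSeries.mul_invOfUnit _ 1 (by rw [constD2 m]; rfl)

lemma cancelD2 {m : ℕ} {a b : PowerSeries ℤ} (h : a * D2 m = b * D2 m) : a = b :=
  cancel_const_one (constD2 m) h

lemma D2_succ (m : ℕ) : D2 (m + 1) = D2 m * (1 - X ^ (2 * (m + 1))) :=
  Finset.prod_range_succ _ m

lemma D2_split {a b : ℕ} (h : a ≤ b) :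
    D2 b = D2 a * ∏ i ∈ Ico a b, (1 - X ^ (2 * (i + 1))) := by
  rw [D2, D2, ← Finset.prod_range_mul_prod_Ico _ h]

/-- Gaussian binomial (base q²) as a power series -/
noncomputable def gb (n m : ℕ) : PowerSeries ℤ :=
  if m ≤ n then D2 n * (I2 m * I2 (n - m)) else 0

lemma gb_of_gt {n m : ℕ} (h : n < m) : gb n m = 0 := by rw [gb, if_neg (by omega)]

lemma I2_zero : I2 0 = 1 := by
  have := D2_mul_I2 0
  rwa [show D2 0 = 1 from Finset.prod_range_zero _, one_mul] at this

lemma gb_self (n : ℕ) : gb n n = 1 := by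
  rw [gb, if_pos le_rfl, Nat.sub_self, I2_zero, mul_one]
  exact D2_mul_I2 n

lemma gb_zero_right (n : ℕ) : gb n 0 = 1 := by
  rw [gb, if_pos (Nat.zero_le n), I2_zero, Nat.sub_zero, one_mul]
  exact D2_mul_I2 n

lemma gb_symm {n m : ℕ} (h : m ≤ n) : gb n m = gb n (n - m) := by
  rw [gb, gb, if_pos h, if_pos (Nat.sub_le n m), Nat.sub_sub_self h, mul_comm (I2 m)]

lemma gbD {n m : ℕ} (h : m ≤ n) : gb n m * (D2 m * D2 (n - m)) = D2 n := by
  rw [gb, if_pos h]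
  linear_combination (D2 n * I2 (n - m) * D2 (n - m)) * D2_mul_I2 m + D2 n * D2_mul_I2 (n - m)

end Pbar8

namespace Pbar8
open PowerSeries Finset

lemma const_D2D2 (a b : ℕ) : constantCoeff (D2 a * D2 b) = 1 := by
  rw [map_mul, constD2, constD2, mul_one]

lemma pasc_main (p d : ℕ) :
    gb (p+2+d+2) (p+2) = X^(2*(p+2)) * gb (p+2+d) (p+2)
      + (1 + X^(2*(p+2+d+1))) * gb (p+2+d) (p+1) + X^(2*(d+2)) * gb (p+2+d) p := by
  set n := p+2+d with hn
  apply cancel_const_one (const_D2D2 (p+2) (d+2))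
  have key1 : gb (n+2) (p+2) * (D2 (p+2) * D2 (d+2)) = D2 (n+2) := by
    have h := gbD (show p+2 ≤ n+2 by omega)
    rwa [show n+2-(p+2) = d+2 by omega] at h
  have h1 : gb n (p+2) * (D2 (p+2) * D2 (d+2))
      = D2 n * ((1 - X^(2*(d+1))) * (1 - X^(2*(d+2)))) := by
    have h := gbD (show p+2 ≤ n by omega)
    rw [show n-(p+2) = d by omega] at h
    have hd2 : D2 (d+2) = D2 d * ((1 - X^(2*(d+1))) * (1 - X^(2*(d+2)))) := by
      rw [D2_succ (d+1), D2_succ d]; ring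
    linear_combination gb n (p+2) * D2 (p+2) * hd2
      + ((1 - X^(2*(d+1))) * (1 - X^(2*(d+2)))) * h
  have h2 : gb n (p+1) * (D2 (p+2) * D2 (d+2))
      = D2 n * ((1 - X^(2*(p+2))) * (1 - X^(2*(d+2)))) := by
    have h := gbD (show p+1 ≤ n by omega)
    rw [show n-(p+1) = d+1 by omega] at h
    have e1 : D2 (p+2) = D2 (p+1) * (1 - X^(2*(p+2))) := D2_succ (p+1)
    have e2 : D2 (d+2) = D2 (d+1) * (1 - X^(2*(d+2))) := D2_succ (d+1)
    linear_combination gb n (p+1) * D2 (d+2) * e1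
      + gb n (p+1) * (D2 (p+1) * (1 - X^(2*(p+2)))) * e2
      + ((1 - X^(2*(p+2))) * (1 - X^(2*(d+2)))) * h
  have h3 : gb n p * (D2 (p+2) * D2 (d+2))
      = D2 n * ((1 - X^(2*(p+1))) * (1 - X^(2*(p+2)))) := by
    have h := gbD (show p ≤ n by omega)
    rw [show n-p = d+2 by omega] at h
    have e1 : D2 (p+2) = D2 p * ((1 - X^(2*(p+1))) * (1 - X^(2*(p+2)))) := by
      rw [D2_succ (p+1), D2_succ p]; ring
    linear_combination gb n p * D2 (d+2) * e1
      + ((1 - X^(2*(p+1))) * (1 - X^(2*(p+2)))) * h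
  have keyD : D2 (n+2) = D2 n * ((1 - X^(2*(n+1))) * (1 - X^(2*(n+2)))) := by
    rw [D2_succ (n+1), D2_succ n]; ring
  rw [key1, keyD, add_mul, add_mul, mul_assoc, mul_assoc, mul_assoc, h1, h2, h3, hn]
  ring

lemma pasc_b1 (d : ℕ) :
    gb (d+2) 1 = X^2 * gb d 1 + (1 + X^(2*(d+1))) * gb d 0 := by
  rcases d with - | d'
  · -- d = 0 : gb 2 1 = X^2 * gb 0 1 + (1+X^2) * 1
    rw [gb_of_gt (show 0 < 1 by omega), gb_zero_right, mul_zero, zero_add, mul_one]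
    apply cancel_const_one (const_D2D2 1 1)
    have h := gbD (show 1 ≤ 2 by omega)
    rw [show 2-1 = 1 by omega] at h
    rw [h]
    have e2 : D2 2 = D2 1 * (1 - X^(2*2)) := D2_succ 1
    have e1 : D2 1 = D2 0 * (1 - X^(2*1)) := D2_succ 0
    have e0 : D2 0 = 1 := Finset.prod_range_zero _
    rw [e2, e1, e0]; ring
  · -- d = d'+1 : use gbD with gb (d'+1) 1
    apply cancel_const_one (const_D2D2 1 (d'+2))
    have key1 : gb (d'+3) 1 * (D2 1 * D2 (d'+2)) = D2 (d'+3) := by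
      have h := gbD (show 1 ≤ d'+3 by omega)
      rwa [show d'+3-1 = d'+2 by omega] at h
    have h1 : gb (d'+1) 1 * (D2 1 * D2 (d'+2)) = D2 (d'+1) * ((1 - X^(2*(d'+1))) * (1 - X^(2*(d'+2)))) := by
      have h := gbD (show 1 ≤ d'+1 by omega)
      rw [show d'+1-1 = d' by omega] at h
      have hd2 : D2 (d'+2) = D2 d' * ((1 - X^(2*(d'+1))) * (1 - X^(2*(d'+2)))) := by
        rw [D2_succ (d'+1), D2_succ d']; ring
      linear_combination gb (d'+1) 1 * D2 1 * hd2
        + ((1 - X^(2*(d'+1))) * (1 - X^(2*(d'+2)))) * h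
    have keyD : D2 (d'+3) = D2 (d'+1) * ((1 - X^(2*(d'+2))) * (1 - X^(2*(d'+3)))) := by
      rw [D2_succ (d'+2), D2_succ (d'+1)]; ring
    have e1 : D2 1 = 1 * (1 - X^(2*1)) := by rw [D2_succ 0, show D2 0 = 1 from Finset.prod_range_zero _]
    rw [key1, keyD, gb_zero_right, mul_one, add_mul, mul_assoc, h1]
    have e2 : D2 (d'+2) = D2 (d'+1) * (1 - X^(2*(d'+2))) := D2_succ (d'+1)
    rw [e1, e2]
    ring

end Pbar8

namespace Pbar8
open PowerSeries Finset

lemma pasc_t1 (q : ℕ) :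
    gb (q+3) (q+2) = (1 + X^(2*(q+2))) * gb (q+1) (q+1) + X^2 * gb (q+1) q := by
  apply cancel_const_one (const_D2D2 (q+2) 1)
  have key1 : gb (q+3) (q+2) * (D2 (q+2) * D2 1) = D2 (q+3) := by
    have h := gbD (show q+2 ≤ q+3 by omega)
    rwa [show q+3-(q+2) = 1 by omega] at h
  have h1 : gb (q+1) q * (D2 (q+2) * D2 1)
      = D2 (q+1) * ((1 - X^(2*(q+1))) * (1 - X^(2*(q+2)))) := by
    have h := gbD (show q ≤ q+1 by omega)
    rw [show q+1-q = 1 by omega] at h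
    have e1 : D2 (q+2) = D2 q * ((1 - X^(2*(q+1))) * (1 - X^(2*(q+2)))) := by
      rw [D2_succ (q+1), D2_succ q]; ring
    linear_combination gb (q+1) q * D2 1 * e1
      + ((1 - X^(2*(q+1))) * (1 - X^(2*(q+2)))) * h
  have keyD : D2 (q+3) = D2 (q+1) * ((1 - X^(2*(q+2))) * (1 - X^(2*(q+3)))) := by
    rw [D2_succ (q+2), D2_succ (q+1)]; ring
  have e2 : D2 (q+2) = D2 (q+1) * (1 - X^(2*(q+2))) := D2_succ (q+1)
  have e1' : D2 1 = 1 * (1 - X^(2*1)) := by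
    rw [D2_succ 0, show D2 0 = 1 from Finset.prod_range_zero _]
  rw [key1, keyD, gb_self, mul_one, add_mul, mul_assoc, h1, e2, e1']
  ring

/-- the exponent `(m-N)²` -/
def Ee (N m : ℕ) : ℕ := ((m : ℤ) - N).natAbs ^ 2

lemma Ee_int (N m : ℕ) : ((Ee N m : ℕ) : ℤ) = ((m : ℤ) - N) ^ 2 := by
  rw [Ee]; push_cast [Int.natAbs_sq]; exact sq_abs _

/-- `b_m` series -/
noncomputable def bb (N m : ℕ) : PowerSeries ℤ := gb (2*N) m * X ^ (Ee N m)

lemma nat_eq_of_int (a b : ℕ) (h : (a:ℤ) = b) : a = b := by exact_mod_cast h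

lemma ee1 (N m : ℕ) : Ee (N+1) m + 2*m = Ee N m + (2*N+1) := by
  apply nat_eq_of_int
  push_cast [Ee_int]
  ring

lemma ee2 (N m : ℕ) : Ee (N+1) (m+1) = Ee N m := by
  apply nat_eq_of_int
  rw [Ee_int, Ee_int]
  push_cast
  ring

lemma ee3 (N m : ℕ) (h : m ≤ 2*N) :
    Ee (N+1) (m+2) + 2*(2*N - m) = Ee N m + (2*N+1) := by
  apply nat_eq_of_int
  push_cast [Ee_int, Nat.cast_sub h]
  ring

/-- combined Pascal recurrence for row `2N → 2N+2` -/
lemma grec (N m : ℕ) (hm : m ≤ 2*N) :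
    gb (2*N+2) (m+2) = X^(2*(m+2)) * gb (2*N) (m+2)
      + (1 + X^(2*(2*N+1))) * gb (2*N) (m+1) + X^(2*(2*N-m)) * gb (2*N) m := by
  rcases lt_trichotomy (m+2) (2*N+1) with hc | hc | hc
  · -- m+2 ≤ 2*N
    have h := pasc_main m (2*N-m-2)
    rw [show m+2+(2*N-m-2)+2 = 2*N+2 by omega, show m+2+(2*N-m-2)+1 = 2*N+1 by omega,
      show m+2+(2*N-m-2) = 2*N by omega, show (2*N-m-2)+2 = 2*N-m by omega] at h
    exact h
  · -- m+2 = 2*N+1, i.e. m = 2*N-1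
    have h := pasc_t1 (2*N-1)
    rw [show 2*N-1+3 = 2*N+2 by omega, show 2*N-1+2 = 2*N+1 by omega,
      show 2*N-1+1 = 2*N by omega] at h
    rw [show m+2 = 2*N+1 by omega, show m+1 = 2*N by omega, show m = 2*N-1 by omega,
      show 2*(2*N-(2*N-1)) = 2 by omega]
    rw [h, gb_of_gt (show 2*N < 2*N+1 by omega)]
    ring
  · -- m+2 = 2*N+2, i.e. m = 2*N
    have hm' : m = 2*N := by omega
    rw [hm', show 2*N+2 = (2*N)+2 from rfl, gb_self,
      gb_of_gt (show 2*N < 2*N+2 by omega), gb_of_gt (show 2*N < 2*N+1 by omega),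
      show 2*(2*N-2*N) = 0 by omega, gb_self]
    ring

lemma bb_rec (N m : ℕ) : bb (N+1) m
    = X^(2*N+1) * bb N m
      + (1 + X^(2*(2*N+1))) * (if m = 0 then 0 else bb N (m-1))
      + X^(2*N+1) * (if m ≤ 1 then 0 else bb N (m-2)) := by
  rcases m with - | m
  · -- m = 0
    simp only [if_pos rfl, if_pos (by omega : (0:ℕ) ≤ 1), mul_zero, add_zero]
    rw [bb, bb, gb_zero_right, gb_zero_right, one_mul, one_mul]
    rw [← pow_add]
    have h0 : Ee (N+1) 0 = 2*N+1 + Ee N 0 := by have := ee1 N 0; omega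
    rw [h0]; simp
  rcases m with - | m
  · -- m = 1
    simp only [if_neg (by omega : ¬(1:ℕ) = 0), if_pos (by omega : (1:ℕ) ≤ 1), mul_zero, add_zero]
    rw [bb, bb, bb]
    rw [show 2*(N+1) = 2*N+2 by ring, pasc_b1 (2*N)]
    have e1 : (2:ℕ) + Ee (N+1) 1 = (2*N+1) + Ee N 1 := by have := ee1 N 1; omega
    have e2 : Ee (N+1) 1 = Ee N 0 := ee2 N 0
    calc (X^2 * gb (2*N) 1 + (1 + X^(2*(2*N+1))) * gb (2*N) 0) * X ^ Ee (N+1) 1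
        = gb (2*N) 1 * (X^2 * X ^ Ee (N+1) 1)
          + (1 + X^(2*(2*N+1))) * (gb (2*N) 0 * X ^ Ee (N+1) 1) := by ring
      _ = _ := by
          rw [← pow_add, e1, e2, pow_add]
          ring
  -- m = m'+2
  simp only [if_neg (by omega : ¬(m+2:ℕ) = 0), if_neg (by omega : ¬(m+2:ℕ) ≤ 1),
    show m+2-1 = m+1 by omega, show m+2-2 = m by omega]
  by_cases hm : m ≤ 2*N
  · rw [bb, bb, bb, bb, show 2*(N+1) = 2*N+2 by ring, grec N m hm]
    have f1 : (X:PowerSeries ℤ)^(2*(m+2)) * X^(Ee (N+1) (m+2)) = X^(2*N+1) * X^(Ee N (m+2)) := by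
      rw [← pow_add, ← pow_add]
      have := ee1 N (m+2); congr 1; omega
    have f2 : (X:PowerSeries ℤ)^(Ee (N+1) (m+2)) = X^(Ee N (m+1)) := by
      rw [ee2 N (m+1)]
    have f3 : (X:PowerSeries ℤ)^(2*(2*N-m)) * X^(Ee (N+1) (m+2)) = X^(2*N+1) * X^(Ee N m) := by
      rw [← pow_add, ← pow_add]
      have := ee3 N m hm; congr 1; omega
    linear_combination gb (2*N) (m+2) * f1
      + (1 + X^(2*(2*N+1))) * gb (2*N) (m+1) * f2 + gb (2*N) m * f3
  · -- degenerate: m+2 ≥ 2N+3, everything vanishes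
    rw [bb, bb, bb, bb]
    rw [gb_of_gt (show 2*(N+1) < m+2 by omega), gb_of_gt (show 2*N < m+2 by omega),
      gb_of_gt (show 2*N < m+1 by omega), gb_of_gt (show 2*N < m by omega)]
    simp

end Pbar8

namespace Pbar8
open PowerSeries Finset

noncomputable def SS (N : ℕ) : PowerSeries ℤ :=
  ∑ m ∈ range (2*N+1), (-1:PowerSeries ℤ)^(m+N) * bb N m

lemma bb_van (N m : ℕ) (h : 2*N < m) : bb N m = 0 := by
  rw [bb, gb_of_gt h, zero_mul]

lemma SS_succ (N : ℕ) : SS (N+1) = (1 - X^(2*N+1))^2 * SS N := by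
  have expand : SS (N+1) = ∑ m ∈ range (2*N+3),
      ((-1:PowerSeries ℤ)^(m+N+1) * (X^(2*N+1) * bb N m)
       + (-1:PowerSeries ℤ)^(m+N+1) * ((1 + X^(2*(2*N+1))) * (if m = 0 then 0 else bb N (m-1)))
       + (-1:PowerSeries ℤ)^(m+N+1) * (X^(2*N+1) * (if m ≤ 1 then 0 else bb N (m-2)))) := by
    rw [SS, show 2*(N+1)+1 = 2*N+3 by ring]
    refine Finset.sum_congr rfl fun m hm => ?_
    rw [show m+(N+1) = m+N+1 by ring, bb_rec N m]
    ring
  rw [expand, Finset.sum_add_distrib, Finset.sum_add_distrib]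
  have hS1 : ∑ m ∈ range (2*N+3), (-1:PowerSeries ℤ)^(m+N+1) * (X^(2*N+1) * bb N m)
      = -(X^(2*N+1)) * SS N := by
    rw [show (2*N+3) = (2*N+1)+1+1 by ring, Finset.sum_range_succ, Finset.sum_range_succ,
      bb_van N (2*N+1) (by omega), bb_van N (2*N+1+1) (by omega)]
    simp only [mul_zero, add_zero]
    rw [SS, Finset.mul_sum]
    refine Finset.sum_congr rfl fun m hm => ?_
    rw [pow_succ]
    ring
  have hS2 : ∑ m ∈ range (2*N+3),
      (-1:PowerSeries ℤ)^(m+N+1) * ((1 + X^(2*(2*N+1))) * (if m = 0 then 0 else bb N (m-1)))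
      = (1 + X^(2*(2*N+1))) * SS N := by
    rw [show (2*N+3) = (2*N+2)+1 by ring, Finset.sum_range_succ']
    have hf0 : (-1:PowerSeries ℤ)^(0+N+1) *
        ((1 + X^(2*(2*N+1))) * (if (0:ℕ) = 0 then 0 else bb N (0-1))) = 0 := by simp
    rw [hf0, add_zero]
    have hterm : ∀ i ∈ range (2*N+2), (-1:PowerSeries ℤ)^(i+1+N+1) *
        ((1 + X^(2*(2*N+1))) * (if i+1 = 0 then 0 else bb N (i+1-1)))
        = (1 + X^(2*(2*N+1))) * ((-1:PowerSeries ℤ)^(i+N) * bb N i) := by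
      intro i hi
      rw [if_neg (by omega), show i+1-1 = i by omega, show i+1+N+1 = (i+N)+2 by ring, pow_add]
      ring
    rw [Finset.sum_congr rfl hterm, show 2*N+2 = (2*N+1)+1 by ring, Finset.sum_range_succ,
      bb_van N (2*N+1) (by omega)]
    simp only [mul_zero, add_zero]
    rw [SS, Finset.mul_sum]
  have hS3 : ∑ m ∈ range (2*N+3),
      (-1:PowerSeries ℤ)^(m+N+1) * (X^(2*N+1) * (if m ≤ 1 then 0 else bb N (m-2)))
      = -(X^(2*N+1)) * SS N := by
    rw [show (2*N+3) = (2*N+2)+1 by ring, Finset.sum_range_succ']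
    rw [show (2*N+2) = (2*N+1)+1 by ring, Finset.sum_range_succ']
    have hf0 : (-1:PowerSeries ℤ)^(0+N+1) *
        (X^(2*N+1) * (if (0:ℕ) ≤ 1 then 0 else bb N (0-2))) = 0 := by simp
    have hf1 : (-1:PowerSeries ℤ)^(0+1+N+1) *
        (X^(2*N+1) * (if (0+1:ℕ) ≤ 1 then 0 else bb N (0+1-2))) = 0 := by simp
    rw [hf0, hf1, add_zero, add_zero]
    have hterm : ∀ i ∈ range (2*N+1), (-1:PowerSeries ℤ)^(i+1+1+N+1) *
        (X^(2*N+1) * (if i+1+1 ≤ 1 then 0 else bb N (i+1+1-2)))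
        = -(X^(2*N+1)) * ((-1:PowerSeries ℤ)^(i+N) * bb N i) := by
      intro i hi
      rw [if_neg (by omega), show i+1+1-2 = i by omega, show i+1+1+N+1 = (i+N)+3 by ring,
        pow_add]
      ring
    rw [Finset.sum_congr rfl hterm, SS, Finset.mul_sum]
  rw [hS1, hS2, hS3]
  ring

lemma SS_prod (N : ℕ) : SS N = ∏ j ∈ range N, (1 - X^(2*j+1))^2 := by
  induction N with
  | zero =>
    rw [SS]
    simp only [Nat.mul_zero, Nat.zero_add, Finset.sum_range_one, Finset.range_zero,
      Finset.prod_empty]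
    rw [bb, gb_self]
    have : Ee 0 0 = 0 := by rw [Ee]; simp
    rw [this]
    simp
  | succ N ih =>
    rw [SS_succ, ih, Finset.prod_range_succ]
    ring

end Pbar8

namespace Pbar8
open PowerSeries Finset

lemma TE.symm {n : ℕ} {A B : PowerSeries ℤ} (h : TE n A B) : TE n B A :=
  fun j hj => (h j hj).symm

lemma TE_Ico_one (n a b : ℕ) (h : n < 2*(a+1)) :
    TE n (∏ i ∈ Ico a b, (1 - (X:PowerSeries ℤ)^(2*(i+1)))) 1 := by
  refine TE.prod fun i hi => ?_
  rw [Finset.mem_Ico] at hi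
  have : (1 : PowerSeries ℤ) - X^(2*(i+1)) = 1 + X^(2*(i+1)) * (-1) := by ring
  rw [this]
  exact TE_one_factor _ (by omega)

lemma gb_lim_le (n N m : ℕ) (hm : m ≤ N) (hfac : n < 2*(m+1)) :
    TE n (gb (2*N) m * (D2 N * D2 N)) (D2 N) := by
  set A := ∏ i ∈ Ico m N, (1 - (X:PowerSeries ℤ)^(2*(i+1))) with hAdef
  set C := ∏ i ∈ Ico (2*N-m) (2*N), (1 - (X:PowerSeries ℤ)^(2*(i+1))) with hCdef
  have hA : D2 N = D2 m * A := D2_split hm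
  have hC : D2 (2*N) = D2 (2*N-m) * C := D2_split (by omega)
  have hg := gbD (show m ≤ 2*N by omega)
  have step1 : gb (2*N) m * (D2 N * D2 N) * (D2 m * D2 (2*N-m))
      = (A * C * D2 N) * (D2 m * D2 (2*N-m)) := by
    rw [show gb (2*N) m * (D2 N * D2 N) * (D2 m * D2 (2*N-m))
        = gb (2*N) m * (D2 m * D2 (2*N-m)) * (D2 N * D2 N) from by ring, hg, hC, hA]
    ring
  have step2 : gb (2*N) m * (D2 N * D2 N) = A * C * D2 N :=
    cancel_const_one (const_D2D2 m (2*N-m)) step1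
  rw [step2]
  have hAC : TE n (A * C) 1 := by
    have h1 := TE_Ico_one n m N hfac
    have h2 := TE_Ico_one n (2*N-m) (2*N) (by omega)
    simpa using TE.mul h1 h2
  have := TE.mul hAC (TE.refl (A := D2 N))
  simpa using this

lemma sq_bound {d n : ℕ} (h : d^2 ≤ n) : 2*d ≤ n + 3 := by
  rcases le_or_gt d 1 with hd | hd
  · omega
  · have : 2*d ≤ d*d := Nat.mul_le_mul_right d hd
    have : d*d = d^2 := (sq d).symm
    omega

lemma Ee_le (N m : ℕ) (hm : m ≤ N) : Ee N m = (N - m)^2 := by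
  apply nat_eq_of_int
  rw [Ee_int]
  push_cast [Nat.cast_sub hm]
  ring

lemma Ee_ge (N m : ℕ) (hm : N ≤ m) : Ee N m = (m - N)^2 := by
  apply nat_eq_of_int
  rw [Ee_int]
  push_cast [Nat.cast_sub hm]
  ring

lemma gb_lim (n m : ℕ) (hm : m ≤ 2*(n+1)) (hEe : Ee (n+1) m ≤ n) :
    TE n (gb (2*(n+1)) m * (D2 (n+1) * D2 (n+1))) (D2 (n+1)) := by
  set N := n + 1 with hN
  rcases le_or_gt m N with hle | hgt
  · apply gb_lim_le n N m hle
    rw [Ee_le N m hle] at hEe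
    have := sq_bound hEe
    omega
  · have hsym : gb (2*N) m = gb (2*N) (2*N - m) := gb_symm (by omega)
    rw [hsym]
    apply gb_lim_le n N (2*N - m) (by omega)
    rw [Ee_ge N m (by omega)] at hEe
    have := sq_bound hEe
    omega

/-- truncated theta series -/
noncomputable def PhiF (N : ℕ) : PowerSeries ℤ :=
  ∑ m ∈ range (2*N+1), (-1:PowerSeries ℤ)^(m+N) * X^(Ee N m)

lemma negpow_C (e : ℕ) : ((-1 : PowerSeries ℤ))^e = C ((-1)^e) := by
  rw [show ((-1 : PowerSeries ℤ)) = C (-1) by simp, ← map_pow]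

lemma negpow_mod (c : ℕ) : ((-1:ℤ))^c = (-1)^(c % 2) := by
  conv_lhs => rw [← Nat.div_add_mod c 2]
  rw [pow_add, pow_mul, neg_one_sq, one_pow, one_mul]

lemma negpow_par {a b : ℕ} (h : a % 2 = b % 2) : ((-1:ℤ))^a = (-1)^b := by
  rw [negpow_mod a, negpow_mod b, h]

lemma coeff_PhiF (N j : ℕ) :
    coeff j (PhiF N) = ∑ m ∈ range (2*N+1), (-1:ℤ)^(m+N) * (if j = Ee N m then 1 else 0) := by
  rw [PhiF, map_sum]
  refine Finset.sum_congr rfl fun m hm => ?_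
  rw [negpow_C, coeff_C_mul, coeff_X_pow]

lemma Ee_sub (N k : ℕ) (h : k ≤ N) : Ee N (N - k) = k^2 := by
  rw [Ee_le N (N-k) (by omega), show N - (N-k) = k by omega]

lemma Ee_add (N k : ℕ) : Ee N (N + k) = k^2 := by
  rw [Ee_ge N (N+k) (by omega), show N + k - N = k by omega]

lemma sq_par (k : ℕ) : k^2 % 2 = k % 2 := by
  rw [sq, Nat.mul_mod]
  rcases (by omega : k % 2 = 0 ∨ k % 2 = 1) with h | h <;> rw [h] <;> rfl

lemma phi_trunc (n : ℕ) : TE n phiNeg (PhiF (n+1)) := by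
  intro j hj
  set N := n + 1 with hN
  rw [coeff_PhiF, phiNeg, coeff_mk]
  by_cases hj0 : j = 0
  · subst hj0
    rw [if_pos rfl]
    have hterm : ∀ m ∈ range (2*N+1),
        (-1:ℤ)^(m+N) * (if 0 = Ee N m then 1 else 0) = (if m = N then 1 else 0) := by
      intro m hm
      rcases eq_or_ne m N with rfl | hne
      · have hE : Ee N N = 0 := by simpa using Ee_add N 0
        rw [if_pos hE.symm, if_pos rfl, negpow_par (show (N+N) % 2 = 0 % 2 by omega),
          pow_zero, mul_one]
      · rw [if_neg hne, if_neg, mul_zero]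
        intro hEe
        rcases le_or_gt m N with hle | hgt
        · rw [Ee_le N m hle] at hEe
          have h1 : 0 < (N - m)^2 := pow_pos (by omega) 2
          omega
        · rw [Ee_ge N m (by omega)] at hEe
          have h1 : 0 < (m - N)^2 := pow_pos (by omega) 2
          omega
    rw [Finset.sum_congr rfl hterm, Finset.sum_ite_eq' (range (2*N+1)) N (fun _ => (1:ℤ)),
      if_pos (by simp [hN])]
  · rw [if_neg hj0]
    by_cases hsq : ∃ k : ℕ, 0 < k ∧ j = k^2
    · obtain ⟨k, hk0, rfl⟩ := hsq
      rw [if_pos ⟨k, hk0, rfl⟩]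
      have hkN : k < N := by
        have : k ≤ k^2 := Nat.le_self_pow two_ne_zero k
        omega
      have hterm : ∀ m ∈ range (2*N+1),
          (-1:ℤ)^(m+N) * (if k^2 = Ee N m then 1 else 0)
          = (if m = N - k then (-1:ℤ)^(k^2) else 0) + (if m = N + k then (-1:ℤ)^(k^2) else 0) := by
        intro m hm
        rcases eq_or_ne m (N - k) with rfl | hne1
        · have hE : Ee N (N - k) = k^2 := Ee_sub N k (by omega)
          rw [if_pos hE.symm, mul_one, if_pos rfl, if_neg (show ¬(N - k = N + k) by omega),
            add_zero]
          exact negpow_par (by rw [sq_par]; omega)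
        rcases eq_or_ne m (N + k) with rfl | hne2
        · have hE : Ee N (N + k) = k^2 := Ee_add N k
          rw [if_pos hE.symm, mul_one, if_neg hne1, if_pos rfl, zero_add]
          exact negpow_par (by rw [sq_par]; omega)
        · rw [if_neg hne1, if_neg hne2, add_zero, if_neg, mul_zero]
          intro hEe
          have hint : ((m:ℤ) - N)^2 = (k:ℤ)^2 := by
            rw [← Ee_int]
            exact_mod_cast congrArg (Nat.cast : ℕ → ℤ) hEe.symm
          have hfac : ((m:ℤ) - N - k) * ((m:ℤ) - N + k) = 0 := by linear_combination hint
          rcases mul_eq_zero.mp hfac with h0 | h0 <;> omega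
      rw [Finset.sum_congr rfl hterm, Finset.sum_add_distrib,
        Finset.sum_ite_eq' (range (2*N+1)) (N-k) (fun _ => (-1:ℤ)^(k^2)),
        Finset.sum_ite_eq' (range (2*N+1)) (N+k) (fun _ => (-1:ℤ)^(k^2)),
        if_pos (by simp; omega), if_pos (by simp; omega)]
      ring
    · rw [if_neg hsq]
      have hterm : ∀ m ∈ range (2*N+1),
          (-1:ℤ)^(m+N) * (if j = Ee N m then 1 else 0) = 0 := by
        intro m hm
        rw [if_neg, mul_zero]
        intro hEe
        rcases le_or_gt m N with hle | hgt
        · rw [Ee_le N m hle] at hEe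
          have hmn : m ≠ N := by
            rintro rfl
            simp at hEe
            exact hj0 hEe
          exact hsq ⟨N - m, by omega, hEe⟩
        · rw [Ee_ge N m (by omega)] at hEe
          exact hsq ⟨m - N, by omega, hEe⟩
      rw [Finset.sum_congr rfl hterm, Finset.sum_const_zero]

end Pbar8

namespace Pbar8
open PowerSeries Finset

lemma oddeven (N : ℕ) : ∏ j ∈ range (2*N), (1 - (X:PowerSeries ℤ)^(1*(j+1)))
    = (∏ j ∈ range N, (1 - (X:PowerSeries ℤ)^(2*j+1))) * D2 N := by
  induction N with
  | zero => simp [D2]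
  | succ N ih =>
    rw [show 2*(N+1) = (2*N)+1+1 by ring, Finset.prod_range_succ, Finset.prod_range_succ, ih,
      Finset.prod_range_succ, D2_succ]
    rw [show (1:ℕ)*(2*N+1) = 2*N+1 by ring, show (1:ℕ)*(2*N+1+1) = 2*(N+1) by ring]
    ring

lemma gauss : phiNeg * fr 2 = fr 1 ^ 2 := by
  ext n
  have hL : coeff n (phiNeg * fr 2) = coeff n (phiNeg * D2 (n+1)) := by
    rw [coeff_mul, coeff_mul]
    refine Finset.sum_congr rfl fun x hx => ?_
    rw [Finset.HasAntidiagonal.mem_antidiagonal] at hx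
    congr 1
    rw [fr]
    exact coeff_seriesProd tame_sub_pow2 (by omega)
  have hR : coeff n (fr 1 ^ 2) = coeff n (SS (n+1) * (D2 (n+1) * D2 (n+1))) := by
    rw [show fr 1 ^ 2 = seriesProd (fun j => (1 - (X:PowerSeries ℤ)^(1*(j+1)))^2) from by
      rw [fr]; exact (seriesProd_pow tame_sub_pow1 2).symm]
    rw [coeff_seriesProd (tame_sub_pow1.pow 2) (show n+1 ≤ 2*(n+1) by omega)]
    rw [Finset.prod_pow, oddeven (n+1), SS_prod, Finset.prod_pow]
    congr 1
    ring
  have core : ∀ m ∈ range (2*(n+1)+1),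
      TE n (((-1:PowerSeries ℤ)^(m+(n+1)) * bb (n+1) m) * (D2 (n+1) * D2 (n+1)))
        (((-1:PowerSeries ℤ)^(m+(n+1)) * X^(Ee (n+1) m)) * D2 (n+1)) := by
    intro m hm
    rw [Finset.mem_range] at hm
    have e1 : ((-1:PowerSeries ℤ)^(m+(n+1)) * bb (n+1) m) * (D2 (n+1) * D2 (n+1))
        = (-1:PowerSeries ℤ)^(m+(n+1)) * (X^(Ee (n+1) m) * (gb (2*(n+1)) m * (D2 (n+1) * D2 (n+1)))) := by
      rw [bb]; ring
    have e2 : ((-1:PowerSeries ℤ)^(m+(n+1)) * X^(Ee (n+1) m)) * D2 (n+1)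
        = (-1:PowerSeries ℤ)^(m+(n+1)) * (X^(Ee (n+1) m) * D2 (n+1)) := by ring
    rw [e1, e2]
    refine TE.mul TE.refl ?_
    by_cases hE : Ee (n+1) m ≤ n
    · exact TE_Xpow_mul (gb_lim n m (by omega) hE)
    · exact TE_Xpow_high (by omega) _ _
  have hmid : coeff n (SS (n+1) * (D2 (n+1) * D2 (n+1))) = coeff n (phiNeg * D2 (n+1)) := by
    have h1 : TE n (SS (n+1) * (D2 (n+1) * D2 (n+1))) (PhiF (n+1) * D2 (n+1)) := by
      rw [SS, PhiF, Finset.sum_mul, Finset.sum_mul]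
      exact TE.sum core
    have h2 : TE n (PhiF (n+1) * D2 (n+1)) (phiNeg * D2 (n+1)) :=
      TE.mul (phi_trunc n).symm TE.refl
    rw [h1 n le_rfl, h2 n le_rfl]
  rw [hL, hR]
  exact hmid.symm

lemma constantCoeff_fr2 : constantCoeff (fr 2) = 1 := by
  rw [← coeff_zero_eq_constantCoeff]
  rw [fr, coeff_seriesProd tame_sub_pow2 (show 0+1 ≤ 1 by omega)]
  simp

lemma overGF_mul_phi (t : ℕ) : overGF t * phiNeg ^ t = 1 := by
  have h1 : overGF t * fr 1 ^ (2*t) = fr 2 ^ t := by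
    rw [overGF_eq t]
    have : V ^ (2*t) * fr 1 ^ (2*t) = 1 := by
      rw [← mul_pow, V_mul_fr1, one_pow]
    calc fr 2 ^ t * V ^ (2*t) * fr 1 ^ (2*t) = fr 2 ^ t * (V ^ (2*t) * fr 1 ^ (2*t)) := by ring
      _ = fr 2 ^ t := by rw [this, mul_one]
  have h2 : phiNeg ^ t * fr 2 ^ t = fr 1 ^ (2*t) := by
    rw [← mul_pow, gauss, ← pow_mul]
  have h3 : (overGF t * phiNeg ^ t) * fr 2 ^ t = 1 * fr 2 ^ t := by
    calc (overGF t * phiNeg ^ t) * fr 2 ^ t = overGF t * (phiNeg ^ t * fr 2 ^ t) := by ring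
      _ = overGF t * fr 1 ^ (2*t) := by rw [h2]
      _ = fr 2 ^ t := h1
      _ = 1 * fr 2 ^ t := (one_mul _).symm
  exact cancel_const_one (by rw [map_pow, constantCoeff_fr2, one_pow]) h3

end Pbar8

namespace Pbar8
open PowerSeries Finset

noncomputable def pr : PowerSeries ℤ →+* PowerSeries (ZMod 8) :=
  PowerSeries.map (Int.castRingHom (ZMod 8))

noncomputable def Bb : PowerSeries (ZMod 8) :=
  PowerSeries.mk fun n => if n = 0 then 0 else if ∃ k : ℕ, 0 < k ∧ n = k ^ 2 then (-1)^n else 0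

lemma two_C : (2 : PowerSeries (ZMod 8)) = C 2 := (map_ofNat (C (R := ZMod 8)) 2).symm
lemma six_C : (6 : PowerSeries (ZMod 8)) = C 6 := (map_ofNat (C (R := ZMod 8)) 6).symm
lemma twelve_C : (12 : PowerSeries (ZMod 8)) = C 12 := (map_ofNat (C (R := ZMod 8)) 12).symm

lemma h8 : (8 : PowerSeries (ZMod 8)) = 0 := by
  rw [← map_ofNat (C (R := ZMod 8)) 8, show (8 : ZMod 8) = 0 from rfl, map_zero]

lemma phi_mod : pr phiNeg = 1 + 2 * Bb := by
  ext n
  rw [pr, coeff_map, phiNeg, coeff_mk, map_add, two_C, coeff_C_mul, Bb, coeff_mk]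
  by_cases h0 : n = 0
  · subst h0
    rw [if_pos rfl, if_pos rfl]
    simp
  · rw [if_neg h0, if_neg h0, coeff_one, if_neg h0, zero_add]
    by_cases hsq : ∃ k : ℕ, 0 < k ∧ n = k ^ 2
    · rw [if_pos hsq, if_pos hsq]
      rw [map_mul, map_pow]
      simp
    · rw [if_neg hsq, if_neg hsq]
      simp

lemma phi4 : (pr phiNeg)^4 = 1 := by
  rw [phi_mod]
  have : ((1:PowerSeries (ZMod 8)) + 2 * Bb)^4
      = 1 + 8 * (Bb + 3*Bb^2 + 4*Bb^3 + 2*Bb^4) := by ring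
  rw [this, h8, zero_mul, add_zero]

lemma sq_ne_six : ∀ x : ZMod 8, x^2 ≠ 6 := by decide

lemma sq_add_sq_ne_six : ∀ x y : ZMod 8, x^2 + y^2 ≠ 6 := by decide

lemma coeff_Bb_6 (n : ℕ) : coeff (8*n+6) Bb = 0 := by
  rw [Bb, coeff_mk, if_neg (by omega : ¬(8*n+6 = 0)), if_neg]
  rintro ⟨k, hk, hkeq⟩
  apply sq_ne_six (k : ZMod 8)
  calc (k : ZMod 8)^2 = ((k^2 : ℕ) : ZMod 8) := by push_cast; ring
    _ = ((8*n+6 : ℕ) : ZMod 8) := by rw [← hkeq]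
    _ = 6 := by
        push_cast
        rw [show ((8:ZMod 8)) = 0 from rfl]
        ring

lemma coeff_Bb2_6 (n : ℕ) : coeff (8*n+6) (Bb * Bb) = 0 := by
  rw [coeff_mul]
  apply Finset.sum_eq_zero
  intro x hx
  rw [Finset.HasAntidiagonal.mem_antidiagonal] at hx
  rw [Bb, coeff_mk, coeff_mk]
  by_cases h1 : x.1 = 0
  · rw [if_pos h1, zero_mul]
  by_cases h2 : x.2 = 0
  · rw [if_pos h2, mul_zero]
  rw [if_neg h1, if_neg h2]
  by_cases hs1 : ∃ k : ℕ, 0 < k ∧ x.1 = k ^ 2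
  · by_cases hs2 : ∃ k : ℕ, 0 < k ∧ x.2 = k ^ 2
    · exfalso
      obtain ⟨k, hk0, hk⟩ := hs1
      obtain ⟨l, hl0, hl⟩ := hs2
      apply sq_add_sq_ne_six (k : ZMod 8) (l : ZMod 8)
      calc (k : ZMod 8)^2 + (l : ZMod 8)^2 = ((k^2 + l^2 : ℕ) : ZMod 8) := by push_cast; ring
        _ = ((8*n+6 : ℕ) : ZMod 8) := by rw [← hk, ← hl, hx]
        _ = 6 := by
            push_cast
            rw [show ((8:ZMod 8)) = 0 from rfl]
            ring
    · rw [if_neg hs2, mul_zero]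
  · rw [if_neg hs1, zero_mul]

lemma key (t : ℕ) (ht : Odd t) (n : ℕ) : ((pbar t (8*n+6) : ℤ) : ZMod 8) = 0 := by
  obtain ⟨u, r, hr, hodd⟩ : ∃ u r, 4*u = t + r ∧ (r = 1 ∨ r = 3) := by
    have h2 : t % 2 = 1 := Nat.odd_iff.mp ht
    rcases (by omega : t % 4 = 1 ∨ t % 4 = 3) with h | h
    · exact ⟨(t+3)/4, 3, by omega, Or.inr rfl⟩
    · exact ⟨(t+1)/4, 1, by omega, Or.inl rfl⟩
  have hmain : pr (overGF t) * (pr phiNeg)^t = 1 := by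
    have h := congrArg pr (overGF_mul_phi t)
    rwa [map_mul, map_pow, map_one] at h
  have hP : pr (overGF t) = (pr phiNeg)^r := by
    calc pr (overGF t) = pr (overGF t) * ((pr phiNeg)^4)^u := by rw [phi4, one_pow, mul_one]
      _ = pr (overGF t) * (pr phiNeg)^(4*u) := by rw [← pow_mul]
      _ = pr (overGF t) * (pr phiNeg)^(t + r) := by rw [hr]
      _ = (pr (overGF t) * (pr phiNeg)^t) * (pr phiNeg)^r := by rw [pow_add]; ring
      _ = (pr phiNeg)^r := by rw [hmain, one_mul]
  have hc : ((pbar t (8*n+6) : ℤ) : ZMod 8) = coeff (8*n+6) (pr (overGF t)) := by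
    rw [pbar, pr, coeff_map]
    rfl
  rw [hc, hP]
  rcases hodd with rfl | rfl
  · rw [pow_one, phi_mod, map_add, two_C, coeff_C_mul, coeff_Bb_6,
      coeff_one, if_neg (by omega : ¬(8*n+6 = 0))]
    ring
  · rw [phi_mod]
    have hexp : ((1:PowerSeries (ZMod 8)) + 2 * Bb)^3
        = 1 + 6 * Bb + 12 * (Bb * Bb) + 8 * (Bb * (Bb * Bb)) := by ring
    rw [hexp, h8, zero_mul, add_zero, map_add, map_add, six_C, twelve_C,
      coeff_C_mul, coeff_C_mul, coeff_Bb_6, coeff_Bb2_6,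
      coeff_one, if_neg (by omega : ¬(8*n+6 = 0))]
    ring

end Pbar8

/-- For all `n ≥ 0` and all odd `t ≥ 1`, `p̄_{-t}(8n+6) ≡ 0 (mod 8)`. -/
theorem pbar_eight_n_add_6 (t : ℕ) (ht1 : 1 ≤ t) (ht : Odd t) (n : ℕ) :
    (8 : ℤ) ∣ pbar t (8 * n + 6) := by
  have h := Pbar8.key t ht n
  have h2 := (ZMod.intCast_zmod_eq_zero_iff_dvd (pbar t (8 * n + 6)) 8).mp h
  exact_mod_cast h2
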